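/- Let n, L be positive integers, P, T ∈ ℂ^{n×n} Hermitian, W ∈ ℂ^{L×L} Hermitian, and Q̃, Ỹ ∈ ℂ^{n×L}. If the block matrices [[P, Q̃],[Q̃^H, I_L]] and [[T, Ỹ],[Ỹ^H, W]] are both positive semidefinite, then 2·|Re Tr(Q̃^H Ỹ)| ≤ Tr(P T) + Tr(W). -/

import Mathlib

open Matrix BigOperators
open scoped ComplexOrder

noncomputable section

lemma psd_trace_re_nonneg {m : Type*} [Fintype m] [DecidableEq m] {M : Matrix m m ℂ}
    (hM : M.PosSemidef) : 0 ≤ M.trace.re := by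
  have h : ∀ i, 0 ≤ (M i i).re := fun i => by
    simpa [Matrix.mulVec, dotProduct, Pi.single_apply, mul_ite] using hM.re_dotProduct_nonneg (Pi.single i 1)
  simpa [Matrix.trace, Matrix.diag, Complex.re_sum] using Finset.sum_nonneg (fun i _ => h i)

lemma trace_fromBlocks' {a b : Type*} [Fintype a] [Fintype b]
    (A : Matrix a a ℂ) (B : Matrix a b ℂ) (C : Matrix b a ℂ) (D : Matrix b b ℂ) :
    (Matrix.fromBlocks A B C D).trace = A.trace + D.trace := by
  simp [Matrix.trace, Fintype.sum_sum_type, Matrix.fromBlocks, Matrix.diag]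

open scoped MatrixOrder in
lemma psd_trace_mul_re_nonneg {m : Type*} [Fintype m] [DecidableEq m]
    {A B : Matrix m m ℂ} (hA : A.PosSemidef) (hB : B.PosSemidef) :
    0 ≤ (A * B).trace.re := by
  have hS := (CFC.sqrt_nonneg A).posSemidef
  have h1 : A * B = CFC.sqrt A * (CFC.sqrt A * B) := by
    rw [← mul_assoc, CFC.sqrt_mul_sqrt_self A hA.nonneg]
  have h2 : (A * B).trace = (CFC.sqrt A * B * CFC.sqrt A).trace := by
    rw [h1, Matrix.trace_mul_comm, mul_assoc]
  have h3 : (CFC.sqrt A * B * CFC.sqrt A).PosSemidef := by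
    have := hB.conjTranspose_mul_mul_same (CFC.sqrt A)
    rwa [hS.isHermitian.eq] at this
  rw [h2]; exact psd_trace_re_nonneg h3

/-- If `[[P, Q̃],[Q̃ᴴ, I_L]] ⪰ 0` and `[[T, Ỹ],[Ỹᴴ, W]] ⪰ 0` with `P, T, W` Hermitian,
then `2·|Re Tr(Q̃ᴴ Ỹ)| ≤ Tr(P T) + Tr(W)`. -/
theorem stmt10 (n L : ℕ) (hn : 0 < n) (hL : 0 < L)
    (P T : Matrix (Fin n) (Fin n) ℂ) (hP : P.IsHermitian) (hT : T.IsHermitian)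
    (W : Matrix (Fin L) (Fin L) ℂ) (hW : W.IsHermitian)
    (Qt Yt : Matrix (Fin n) (Fin L) ℂ)
    (h1 : (Matrix.fromBlocks P Qt Qtᴴ (1 : Matrix (Fin L) (Fin L) ℂ)).PosSemidef)
    (h2 : (Matrix.fromBlocks T Yt Ytᴴ W).PosSemidef) :
    2 * |((Qtᴴ * Yt).trace.re)| ≤ (P * T).trace.re + W.trace.re := by
  -- the negated version of h1
  have h1' : (Matrix.fromBlocks P (-Qt) (-Qt)ᴴ (1 : Matrix (Fin L) (Fin L) ℂ)).PosSemidef := by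
    have hD := h1.conjTranspose_mul_mul_same
      (Matrix.fromBlocks 1 0 0 (-1) : Matrix (Fin n ⊕ Fin L) (Fin n ⊕ Fin L) ℂ)
    have heq : (Matrix.fromBlocks 1 0 0 (-1) : Matrix (Fin n ⊕ Fin L) (Fin n ⊕ Fin L) ℂ)ᴴ *
        (Matrix.fromBlocks P Qt Qtᴴ 1) * (Matrix.fromBlocks 1 0 0 (-1)) =
        Matrix.fromBlocks P (-Qt) (-Qt)ᴴ 1 := by
      simp [Matrix.fromBlocks_conjTranspose, Matrix.fromBlocks_multiply]
    rwa [heq] at hD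
  -- trace identity
  have key : ∀ (Q : Matrix (Fin n) (Fin L) ℂ),
      (Matrix.fromBlocks P Q Qᴴ (1 : Matrix (Fin L) (Fin L) ℂ)).PosSemidef →
      0 ≤ (P * T).trace.re + 2 * (Qᴴ * Yt).trace.re + W.trace.re := by
    intro Q hQ
    have h0 := psd_trace_mul_re_nonneg hQ h2
    rw [Matrix.fromBlocks_multiply, trace_fromBlocks' _ _ _ _] at h0
    have hconj : (Q * Ytᴴ).trace = star ((Qᴴ * Yt).trace) := by
      rw [Matrix.trace_mul_comm, ← Matrix.trace_conjTranspose]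
      simp [Matrix.conjTranspose_mul]
    rw [Matrix.trace_add, Matrix.trace_add, hconj] at h0
    simp only [Complex.add_re, Complex.star_def, Complex.conj_re, Matrix.one_mul] at h0
    linarith
  have k1 := key Qt h1
  have k2 := key (-Qt) h1'
  rw [show ((-Qt)ᴴ * Yt).trace = -((Qtᴴ * Yt).trace) by simp] at k2
  simp only [Complex.neg_re] at k2
  rcases abs_cases ((Qtᴴ * Yt).trace.re) with ⟨h, _⟩ | ⟨h, _⟩ <;> rw [h] <;> linarith
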